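/- For every natural number k ≥ 1: ∑_{p ≤ √x} (1/p)·((log p)/(log x))^k = 1/(k·2^k) + (1/2^{k−1})·O(1/log x), i.e., there exists a constant M (depending on k) such that for all x ≥ 4, |∑_{p prime, p ≤ √x} (log p)^k / (p (log x)^k) − 1/(k 2^k)| ≤ M/(2^{k−1} log x). -/

import Mathlib

open Finset Real

open ArithmeticFunction MeasureTheory in
noncomputable def aP (n : ℕ) : ℝ := if n.Prime then Real.log n / n else 0

theorem aP_nonneg (n : ℕ) : 0 ≤ aP n := by
  unfold aP
  split
  · have : (0:ℝ) ≤ Real.log n := Real.log_natCast_nonneg n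
    positivity
  · exact le_refl 0


-- theta bound
theorem theta_bound (N : ℕ) : ∑ p ∈ (Iic N).filter Nat.Prime, Real.log p ≤ N * Real.log 4 := by
  have h1 : ∑ p ∈ (Iic N).filter Nat.Prime, Real.log p
      = Real.log (primorial N) := by
    rw [primorial, Nat.cast_prod, Real.log_prod]
    · congr 1
      ext p
      simp [Nat.lt_succ_iff]
    · intro p hp
      simp only [mem_filter, mem_range] at hp
      exact_mod_cast hp.2.pos.ne'
  rw [h1]
  calc Real.log (primorial N) ≤ Real.log ((4:ℕ) ^ N) := by
        apply Real.log_le_log (by exact_mod_cast primorial_pos N)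
        exact_mod_cast primorial_le_4_pow N
    _ = N * Real.log 4 := by
        rw [Real.log_pow]; norm_num


section auxiliary
open ArithmeticFunction MeasureTheory

theorem ppow_sum_bound : ∃ C : ℝ, 0 ≤ C ∧ ∀ N : ℕ,
    ∑ d ∈ (Iic N).filter (fun d => IsPrimePow d ∧ ¬ d.Prime), Λ d / d ≤ C := by
  have hsummable : Summable (fun n : ℕ => ((n : ℝ) ^ (3/2 : ℝ))⁻¹) :=
    (Real.summable_nat_rpow_inv (p := 3/2)).mpr (by norm_num)
  have htsum0 : (0:ℝ) ≤ ∑' n : ℕ, ((n : ℝ) ^ (3/2 : ℝ))⁻¹ :=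
    tsum_nonneg (fun n => by positivity)
  refine ⟨4 * ∑' n : ℕ, ((n : ℝ) ^ (3/2 : ℝ))⁻¹, by linarith, fun N => ?_⟩
  have step1 : ∑ d ∈ (Iic N).filter (fun d => IsPrimePow d ∧ ¬ d.Prime), Λ d / d
      ≤ ∑ pj ∈ ((Iic N).filter Nat.Prime) ×ˢ (Icc 2 N),
          Real.log pj.1 / (pj.1 : ℝ) ^ pj.2 := by
    have key : ∑ d ∈ (Iic N).filter (fun d => IsPrimePow d ∧ ¬ d.Prime), Λ d / d
        = ∑ pj ∈ (((Iic N).filter Nat.Prime) ×ˢ (Icc 2 N)).filter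
            (fun pj => pj.1 ^ pj.2 ≤ N), Real.log pj.1 / (pj.1 : ℝ) ^ pj.2 := by
      refine Finset.sum_nbij' (fun d => (d.minFac, d.factorization d.minFac))
        (fun pj => pj.1 ^ pj.2) ?_ ?_ ?_ ?_ ?_
      · rintro d hd
        simp only [mem_filter, mem_Iic, mem_product, mem_Icc] at hd ⊢
        obtain ⟨hdN, hpp, hnp⟩ := hd
        have h1 : d.minFac ^ d.factorization d.minFac = d := hpp.minFac_pow_factorization_eq
        have hp : d.minFac.Prime := Nat.minFac_prime hpp.ne_one
        have hj2 : 2 ≤ d.factorization d.minFac := by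
          have hne0 : d.factorization d.minFac ≠ 0 := Nat.factorization_minFac_ne_zero hpp.one_lt
          have hne1 : d.factorization d.minFac ≠ 1 := by
            intro h'
            rw [h', pow_one] at h1
            exact hnp (h1 ▸ hp)
          omega
        refine ⟨⟨⟨?_, hp⟩, hj2, ?_⟩, by rw [h1]; exact hdN⟩
        · calc d.minFac ≤ d := Nat.minFac_le hpp.pos
            _ ≤ N := hdN
        · have hlt : d.factorization d.minFac < d := by
            calc d.factorization d.minFac < 2 ^ d.factorization d.minFac :=
                Nat.lt_two_pow_self
              _ ≤ d.minFac ^ d.factorization d.minFac := Nat.pow_le_pow_left hp.two_le _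
              _ = d := h1
          omega
      · rintro ⟨p, j⟩ hpj
        simp only [mem_filter, mem_product, mem_Iic, mem_Icc] at hpj ⊢
        obtain ⟨⟨⟨hpN, hp⟩, hj2, hjN⟩, hle⟩ := hpj
        refine ⟨hle, ⟨p, j, hp.prime, by omega, rfl⟩, ?_⟩
        intro hprime
        rcases (Nat.Prime.eq_one_or_self_of_dvd hprime p (dvd_pow_self p (by omega))) with h | h
        · exact absurd h hp.one_lt.ne'
        · have h' : p ^ 1 = p ^ j := by rw [pow_one]; exact h
          have := Nat.pow_right_injective hp.two_le h'
          omega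
      · intro d hd
        simp only [mem_filter, mem_Iic] at hd
        exact hd.2.1.minFac_pow_factorization_eq
      · rintro ⟨p, j⟩ hpj
        simp only [mem_filter, mem_product, mem_Iic, mem_Icc] at hpj
        obtain ⟨⟨⟨hpN, hp⟩, hj2, hjN⟩, hle⟩ := hpj
        have h2 := hp.pow_minFac (k := j) (by omega)
        show ((p ^ j).minFac, (p ^ j).factorization (p ^ j).minFac) = (p, j)
        rw [h2, hp.factorization_pow, Finsupp.single_eq_same]
      · intro d hd
        simp only [mem_filter, mem_Iic] at hd
        obtain ⟨hdN, hpp, hnp⟩ := hd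
        have h1 : d.minFac ^ d.factorization d.minFac = d := hpp.minFac_pow_factorization_eq
        rw [vonMangoldt_apply, if_pos hpp]
        congr 1
        exact_mod_cast congrArg (Nat.cast (R := ℝ)) h1.symm
    rw [key]
    refine Finset.sum_le_sum_of_subset_of_nonneg (Finset.filter_subset _ _) ?_
    rintro ⟨p, j⟩ hpj _
    have hp : Nat.Prime p := by
      simp only [mem_product, mem_filter, mem_Iic, mem_Icc] at hpj
      exact hpj.1.2
    have h0 : (0:ℝ) ≤ Real.log p := Real.log_nonneg (by exact_mod_cast hp.one_le)
    positivity
  refine step1.trans ?_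
  -- now bound the double sum
  rw [Finset.sum_product]
  have inner : ∀ p ∈ (Iic N).filter Nat.Prime,
      ∑ j ∈ Icc 2 N, Real.log p / (p:ℝ) ^ j ≤ Real.log p * (2 / (p:ℝ)^2) := by
    intro p hp
    simp only [mem_filter, mem_Iic] at hp
    have hp2 : (2:ℝ) ≤ p := by exact_mod_cast hp.2.two_le
    have hppos : (0:ℝ) < p := by linarith
    have hinv : ((p:ℝ))⁻¹ ≤ 1/2 := by
      rw [inv_le_comm₀ ‹(0:ℝ) < p› (by norm_num)]
      simpa using hp2
    have hinvpos : (0:ℝ) ≤ (p:ℝ)⁻¹ := by positivity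
    have hlt1 : ((p:ℝ))⁻¹ < 1 := by linarith
    have hgeo : ∑ j ∈ Icc 2 N, ((p:ℝ)⁻¹) ^ j ≤ ((p:ℝ)⁻¹)^2 / (1 - (p:ℝ)⁻¹) := by
      rw [show Icc 2 N = Ico 2 (N+1) by rw [Finset.Ico_add_one_right_eq_Icc]]
      rcases le_or_gt 2 (N+1) with h | h
      · exact geom_sum_Ico_le_of_lt_one hinvpos hlt1
      · rw [Finset.Ico_eq_empty (by omega)]
        simp only [Finset.sum_empty]
        have : (0:ℝ) < 1 - (p:ℝ)⁻¹ := by linarith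
        positivity
    have h2 : ((p:ℝ)⁻¹)^2 / (1 - (p:ℝ)⁻¹) ≤ 2 * ((p:ℝ)⁻¹)^2 := by
      rw [div_le_iff₀ (by linarith)]
      nlinarith
    have hlog : (0:ℝ) ≤ Real.log p := Real.log_nonneg (by linarith)
    calc ∑ j ∈ Icc 2 N, Real.log p / (p:ℝ) ^ j
        = Real.log p * ∑ j ∈ Icc 2 N, ((p:ℝ)⁻¹) ^ j := by
          rw [Finset.mul_sum]
          congr 1; ext j
          rw [inv_pow, div_eq_mul_inv]
      _ ≤ Real.log p * (2 * ((p:ℝ)⁻¹)^2) := by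
          apply mul_le_mul_of_nonneg_left (hgeo.trans h2) hlog
      _ = Real.log p * (2 / (p:ℝ)^2) := by
          rw [inv_pow]; ring
  calc ∑ p ∈ (Iic N).filter Nat.Prime, ∑ j ∈ Icc 2 N, Real.log p / (p:ℝ) ^ j
      ≤ ∑ p ∈ (Iic N).filter Nat.Prime, Real.log p * (2 / (p:ℝ)^2) :=
        Finset.sum_le_sum inner
    _ ≤ ∑ n ∈ Iic N, 4 * ((n : ℝ) ^ (3/2 : ℝ))⁻¹ := by
        refine (Finset.sum_le_sum_of_subset_of_nonneg (Finset.filter_subset _ _) ?_).trans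
          (Finset.sum_le_sum ?_)
        · intro n _ _
          have : (0:ℝ) ≤ Real.log n := Real.log_natCast_nonneg n
          positivity
        · intro n _
          rcases Nat.eq_zero_or_pos n with rfl | hn
          · simp [Real.zero_rpow]
          have hn1 : (1:ℝ) ≤ n := by exact_mod_cast hn
          have hnpos : (0:ℝ) < n := by linarith
          have hlog : Real.log n ≤ 2 * (n:ℝ) ^ ((1:ℝ)/2) := by
            have h := Real.add_one_le_exp (Real.log ((n:ℝ) ^ ((1:ℝ)/2)))
            have hs : Real.log ((n:ℝ) ^ ((1:ℝ)/2)) = (1/2) * Real.log n :=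
              Real.log_rpow hnpos _
            have hexp : Real.exp (Real.log ((n:ℝ) ^ ((1:ℝ)/2))) = (n:ℝ) ^ ((1:ℝ)/2) :=
              Real.exp_log (Real.rpow_pos_of_pos hnpos _)
            rw [hexp, hs] at h
            linarith
          have key : (n:ℝ) ^ ((1:ℝ)/2) / (n:ℝ)^2 = ((n:ℝ) ^ ((3:ℝ)/2))⁻¹ := by
            rw [show ((n:ℝ)^(2:ℕ)) = (n:ℝ)^((2:ℝ)) from (by
                  rw [← Real.rpow_natCast (n:ℝ) 2]; norm_num),
              ← Real.rpow_sub hnpos, show (1:ℝ)/2 - 2 = -(3/2) by norm_num,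
              Real.rpow_neg hnpos.le]
          calc Real.log n * (2/(n:ℝ)^2)
              ≤ (2 * (n:ℝ)^((1:ℝ)/2)) * (2/(n:ℝ)^2) := by
                apply mul_le_mul_of_nonneg_right hlog (by positivity)
            _ = 4 * ((n:ℝ)^((1:ℝ)/2) / (n:ℝ)^2) := by ring
            _ = 4 * ((n:ℝ) ^ ((3:ℝ)/2))⁻¹ := by rw [key]
    _ = 4 * ∑ n ∈ Iic N, ((n : ℝ) ^ (3/2 : ℝ))⁻¹ := by rw [Finset.mul_sum]
    _ ≤ 4 * ∑' n : ℕ, ((n : ℝ) ^ (3/2 : ℝ))⁻¹ := by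
        apply mul_le_mul_of_nonneg_left _ (by norm_num)
        exact Summable.sum_le_tsum _ (fun n _ => by positivity) hsummable

theorem logsum_eq (N : ℕ) :
    ∑ n ∈ Iic N, Real.log n = ∑ n ∈ Icc 1 N, Real.log n := by
  refine (Finset.sum_subset (fun n hn => ?_) (fun n hn hn' => ?_)).symm
  · simp only [mem_Icc, mem_Iic] at hn ⊢; omega
  · simp only [mem_Icc, mem_Iic] at hn hn'
    have : n = 0 := by omega
    simp [this]

theorem logsum_upper (N : ℕ) : ∑ n ∈ Iic N, Real.log n ≤ N * Real.log N := by
  rw [logsum_eq]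
  calc ∑ n ∈ Icc 1 N, Real.log n ≤ ∑ n ∈ Icc 1 N, Real.log N := by
        refine Finset.sum_le_sum fun n hn => ?_
        simp only [mem_Icc] at hn
        apply Real.log_le_log (by exact_mod_cast hn.1) (by exact_mod_cast hn.2)
    _ = N * Real.log N := by
        rw [Finset.sum_const, Nat.card_Icc]
        simp [nsmul_eq_mul]

theorem logsum_lower (N : ℕ) : N * Real.log N - N ≤ ∑ n ∈ Iic N, Real.log n := by
  rw [logsum_eq]
  have hfac : ∑ n ∈ Icc 1 N, Real.log n = Real.log (Nat.factorial N : ℝ) := by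
    rw [← Finset.prod_Ico_id_eq_factorial, show Icc 1 N = Ico 1 (N+1) by
      rw [Finset.Ico_add_one_right_eq_Icc]]
    rw [Nat.cast_prod, Real.log_prod]
    intro n hn
    simp only [mem_Ico] at hn
    exact_mod_cast (by omega : n ≠ 0)
  rw [hfac]
  have h := Real.pow_div_factorial_le_exp (x := (N:ℝ)) (Nat.cast_nonneg N) N
  have hfacpos : (0:ℝ) < (Nat.factorial N : ℝ) := by exact_mod_cast N.factorial_pos
  have h2 : (N:ℝ) ^ N ≤ (Nat.factorial N : ℝ) * Real.exp N := by
    rw [div_le_iff₀ hfacpos] at h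
    linarith [h]
  rcases Nat.eq_zero_or_pos N with rfl | hN
  · simp
  have hNpos : (0:ℝ) < N := by exact_mod_cast hN
  have h3 : Real.log ((N:ℝ) ^ N) ≤ Real.log ((Nat.factorial N : ℝ) * Real.exp N) :=
    Real.log_le_log (by positivity) h2
  rw [Real.log_pow, Real.log_mul hfacpos.ne' (Real.exp_ne_zero _), Real.log_exp] at h3
  push_cast at h3 ⊢
  linarith

theorem logsum_identity (N : ℕ) :
    ∑ n ∈ Iic N, Real.log n = ∑ d ∈ Iic N, Λ d * ((N / d : ℕ) : ℝ) := by
  have hIic : ∀ f : ℕ → ℝ, f 0 = 0 → ∑ n ∈ Iic N, f n = ∑ n ∈ Ioc 0 N, f n := by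
    intro f hf
    refine (Finset.sum_subset (fun n hn => ?_) (fun n hn hn' => ?_)).symm
    · simp only [mem_Ioc, mem_Iic] at hn ⊢; omega
    · simp only [mem_Ioc, mem_Iic] at hn hn'
      have : n = 0 := by omega
      rw [this, hf]
  rw [hIic _ (by simp), hIic _ (by simp)]
  have h1 : ∀ n ∈ Ioc 0 N, Real.log n = ∑ d ∈ Ioc 0 N, if d ∣ n then Λ d else 0 := by
    intro n hn
    simp only [mem_Ioc] at hn
    rw [← ArithmeticFunction.vonMangoldt_sum, ← Finset.sum_filter]
    congr 1
    ext d
    simp only [Nat.mem_divisors, mem_filter, mem_Ioc]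
    constructor
    · rintro ⟨hd, _⟩
      exact ⟨⟨Nat.pos_of_dvd_of_pos hd hn.1, (Nat.le_of_dvd hn.1 hd).trans hn.2⟩, hd⟩
    · rintro ⟨_, hd⟩
      exact ⟨hd, by omega⟩
  calc ∑ n ∈ Ioc 0 N, Real.log n
      = ∑ n ∈ Ioc 0 N, ∑ d ∈ Ioc 0 N, if d ∣ n then Λ d else 0 :=
        Finset.sum_congr rfl h1
    _ = ∑ d ∈ Ioc 0 N, ∑ n ∈ Ioc 0 N, if d ∣ n then Λ d else 0 := Finset.sum_comm
    _ = ∑ d ∈ Ioc 0 N, Λ d * ((N / d : ℕ) : ℝ) := by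
        refine Finset.sum_congr rfl fun d hd => ?_
        rw [← Finset.sum_filter, Finset.sum_const, ← Nat.Ioc_filter_dvd_card_eq_div N d,
          nsmul_eq_mul, mul_comm]

theorem mertens_vonMangoldt : ∃ C : ℝ, 0 ≤ C ∧ ∀ N : ℕ, 1 ≤ N →
    |∑ d ∈ Iic N, Λ d / d - Real.log N| ≤ C := by
  obtain ⟨C₂, hC₂0, hC₂⟩ := ppow_sum_bound
  have hlog4 : (0:ℝ) ≤ Real.log 4 := Real.log_nonneg (by norm_num)
  refine ⟨Real.log 4 + C₂ + 1, by linarith, fun N hN => ?_⟩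
  have hNpos : (0:ℝ) < N := by exact_mod_cast hN
  -- psi bound
  have hpsi : ∑ d ∈ Iic N, Λ d ≤ (Real.log 4 + C₂) * N := by
    rw [← Finset.sum_filter_add_sum_filter_not (Iic N) Nat.Prime]
    have hprime : ∑ d ∈ (Iic N).filter Nat.Prime, Λ d ≤ N * Real.log 4 := by
      refine le_trans (le_of_eq (Finset.sum_congr rfl fun p hp => ?_)) (theta_bound N)
      simp only [mem_filter] at hp
      exact vonMangoldt_apply_prime hp.2
    have hnonprime : ∑ d ∈ (Iic N).filter (fun d => ¬ d.Prime), Λ d ≤ C₂ * N := by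
      have e1 : ∑ d ∈ (Iic N).filter (fun d => ¬ d.Prime), Λ d
          ≤ N * ∑ d ∈ (Iic N).filter (fun d => ¬ d.Prime), Λ d / d := by
        rw [Finset.mul_sum]
        refine Finset.sum_le_sum fun d hd => ?_
        simp only [mem_filter, mem_Iic] at hd
        rcases Nat.eq_zero_or_pos d with rfl | hdpos
        · simp
        have hd1 : (1:ℝ) ≤ d := by exact_mod_cast hdpos
        have hdN : (d:ℝ) ≤ N := by exact_mod_cast hd.1
        have h0 : 0 ≤ Λ d := vonMangoldt_nonneg
        calc Λ d = (d:ℝ) * (Λ d / d) := by field_simp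
          _ ≤ (N:ℝ) * (Λ d / d) := by
              apply mul_le_mul_of_nonneg_right hdN (by positivity)
      have e2 : ∑ d ∈ (Iic N).filter (fun d => ¬ d.Prime), Λ d / d
          = ∑ d ∈ (Iic N).filter (fun d => IsPrimePow d ∧ ¬ d.Prime), Λ d / d := by
        refine (Finset.sum_subset (fun d hd => ?_) (fun d hd hd' => ?_)).symm
        · simp only [mem_filter] at hd ⊢
          exact ⟨hd.1, hd.2.2⟩
        · simp only [mem_filter] at hd hd'
          have : ¬ IsPrimePow d := fun h => hd' ⟨hd.1, h, hd.2⟩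
          rw [vonMangoldt_apply, if_neg this, zero_div]
      calc ∑ d ∈ (Iic N).filter (fun d => ¬ d.Prime), Λ d
          ≤ N * ∑ d ∈ (Iic N).filter (fun d => ¬ d.Prime), Λ d / d := e1
        _ = N * ∑ d ∈ (Iic N).filter (fun d => IsPrimePow d ∧ ¬ d.Prime), Λ d / d := by
            rw [e2]
        _ ≤ N * C₂ := by
            apply mul_le_mul_of_nonneg_left (hC₂ N) (by positivity)
        _ = C₂ * N := mul_comm _ _
    linarith
  -- floor comparison
  have key1 : ∑ n ∈ Iic N, Real.log n ≤ N * ∑ d ∈ Iic N, Λ d / d := by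
    rw [logsum_identity, Finset.mul_sum]
    refine Finset.sum_le_sum fun d hd => ?_
    have h0 : 0 ≤ Λ d := vonMangoldt_nonneg
    calc Λ d * ((N / d : ℕ) : ℝ) ≤ Λ d * ((N:ℝ) / d) :=
          mul_le_mul_of_nonneg_left (Nat.cast_div_le) h0
      _ = (N:ℝ) * (Λ d / d) := by ring
  have key2 : N * ∑ d ∈ Iic N, Λ d / d ≤ ∑ n ∈ Iic N, Real.log n + (Real.log 4 + C₂) * N := by
    rw [logsum_identity, Finset.mul_sum]
    have : ∀ d ∈ Iic N, (N:ℝ) * (Λ d / d) ≤ Λ d * ((N / d : ℕ) : ℝ) + Λ d := by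
      intro d hd
      have h0 : 0 ≤ Λ d := vonMangoldt_nonneg
      rcases Nat.eq_zero_or_pos d with rfl | hdpos
      · simp
      have hdpos' : (0:ℝ) < d := by exact_mod_cast hdpos
      have hfloor : (N:ℝ) / d ≤ ((N / d : ℕ) : ℝ) + 1 := by
        rw [div_le_iff₀ hdpos']
        have hnat : N < d * (N / d) + d := by
          have h1 := Nat.div_add_mod N d
          have h2 := Nat.mod_lt N hdpos
          omega
        have hcast : (N:ℝ) < (d:ℝ) * ((N / d : ℕ) : ℝ) + d := by exact_mod_cast hnat
        nlinarith [hcast]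
      calc (N:ℝ) * (Λ d / d) = Λ d * ((N:ℝ) / d) := by ring
        _ ≤ Λ d * (((N / d : ℕ) : ℝ) + 1) := mul_le_mul_of_nonneg_left hfloor h0
        _ = Λ d * ((N / d : ℕ) : ℝ) + Λ d := by ring
    calc ∑ d ∈ Iic N, (N:ℝ) * (Λ d / d) ≤ ∑ d ∈ Iic N, (Λ d * ((N / d : ℕ) : ℝ) + Λ d) :=
          Finset.sum_le_sum this
      _ = ∑ d ∈ Iic N, Λ d * ((N / d : ℕ) : ℝ) + ∑ d ∈ Iic N, Λ d := Finset.sum_add_distrib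
      _ ≤ ∑ d ∈ Iic N, Λ d * ((N / d : ℕ) : ℝ) + (Real.log 4 + C₂) * N := by linarith [hpsi]
  have hup := logsum_upper N
  have hlo := logsum_lower N
  have h5 : (N:ℝ) * Real.log N ≤ (N:ℝ) * ((∑ d ∈ Iic N, Λ d / d) + 1) := by
    rw [mul_add, mul_one]; linarith
  have h6 : Real.log N ≤ (∑ d ∈ Iic N, Λ d / d) + 1 :=
    le_of_mul_le_mul_left h5 hNpos
  have h7 : (N:ℝ) * (∑ d ∈ Iic N, Λ d / d) ≤ (N:ℝ) * (Real.log N + Real.log 4 + C₂) := by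
    rw [mul_add, mul_add]; linarith
  have h8 : (∑ d ∈ Iic N, Λ d / d) ≤ Real.log N + Real.log 4 + C₂ :=
    le_of_mul_le_mul_left h7 hNpos
  rw [abs_le]
  constructor <;> linarith

theorem mertens_primes_real : ∃ C : ℝ, 0 ≤ C ∧ ∀ t : ℝ, 1 ≤ t →
    |∑ n ∈ Icc 0 ⌊t⌋₊, aP n - Real.log t| ≤ C := by
  obtain ⟨C₁, hC₁0, hC₁⟩ := mertens_vonMangoldt
  obtain ⟨C₂, hC₂0, hC₂⟩ := ppow_sum_bound
  have hlog2 : (0:ℝ) ≤ Real.log 2 := Real.log_nonneg (by norm_num)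
  refine ⟨C₁ + C₂ + Real.log 2, by linarith, fun t ht => ?_⟩
  set N := ⌊t⌋₊ with hNdef
  have hN1 : 1 ≤ N := Nat.le_floor (by exact_mod_cast ht)
  have hNt : (N:ℝ) ≤ t := Nat.floor_le (by linarith)
  have htN : t < N + 1 := Nat.lt_floor_add_one t
  have hNpos : (0:ℝ) < N := by exact_mod_cast hN1
  -- the sum equals sum over primes
  have hsum : ∑ n ∈ Icc 0 N, aP n
      = ∑ p ∈ (Iic N).filter Nat.Prime, Real.log p / p := by
    simp only [aP]
    rw [show Icc 0 N = Iic N by ext n; simp]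
    rw [Finset.sum_filter]
  -- compare prime sum with vonMangoldt sum
  have hsplit : ∑ d ∈ Iic N, Λ d / d
      = ∑ p ∈ (Iic N).filter Nat.Prime, Real.log p / p
        + ∑ d ∈ (Iic N).filter (fun d => IsPrimePow d ∧ ¬ d.Prime), Λ d / d := by
    rw [← Finset.sum_filter_add_sum_filter_not (Iic N) Nat.Prime (fun d => Λ d / d)]
    congr 1
    · refine Finset.sum_congr rfl fun p hp => ?_
      simp only [mem_filter] at hp
      rw [vonMangoldt_apply_prime hp.2]
    · refine (Finset.sum_subset (fun d hd => ?_) (fun d hd hd' => ?_)).symm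
      · simp only [mem_filter] at hd ⊢
        exact ⟨hd.1, hd.2.2⟩
      · simp only [mem_filter] at hd hd'
        have : ¬ IsPrimePow d := fun h => hd' ⟨hd.1, h, hd.2⟩
        rw [vonMangoldt_apply, if_neg this, zero_div]
  have hBpos : 0 ≤ ∑ d ∈ (Iic N).filter (fun d => IsPrimePow d ∧ ¬ d.Prime), Λ d / d :=
    Finset.sum_nonneg fun d _ => div_nonneg vonMangoldt_nonneg (Nat.cast_nonneg d)
  have h1 := hC₁ N hN1
  -- log t vs log N
  have hlogtN : Real.log N ≤ Real.log t := Real.log_le_log hNpos hNt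
  have hlogtN2 : Real.log t ≤ Real.log N + Real.log 2 := by
    rw [← Real.log_mul hNpos.ne' (by norm_num)]
    apply Real.log_le_log (by linarith)
    have hN1' : (1:ℝ) ≤ N := by exact_mod_cast hN1
    linarith
  rw [hsum]
  rw [abs_le] at h1 ⊢
  constructor
  · linarith [hC₂ N, h1.1]
  · linarith [hC₂ N, h1.2]

theorem ftc_pow (j : ℕ) (hj : 1 ≤ j) (b : ℝ) (hb : 1 ≤ b) :
    ∫ t in Set.Ioc 1 b, (j:ℝ) * Real.log t ^ (j-1) * t⁻¹ = Real.log b ^ j := by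
  have hne : ∀ t ∈ Set.Icc (1:ℝ) b, t ≠ 0 := fun t ht =>
    ne_of_gt (lt_of_lt_of_le zero_lt_one ht.1)
  have hcont : ContinuousOn (fun t : ℝ => (j:ℝ) * Real.log t ^ (j-1) * t⁻¹)
      (Set.Icc 1 b) := by
    refine (continuousOn_const.mul ((Real.continuousOn_log.mono ?_).pow _)).mul
      (continuousOn_id.inv₀ hne)
    intro t ht
    exact hne t ht
  rw [← intervalIntegral.integral_of_le hb]
  have hHD : ∀ t ∈ Set.uIcc (1:ℝ) b,
      HasDerivAt (fun u => Real.log u ^ j) ((j:ℝ) * Real.log t ^ (j-1) * t⁻¹) t := by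
    intro t ht
    rw [Set.uIcc_of_le hb] at ht
    exact (Real.hasDerivAt_log (hne t ht)).pow j
  rw [intervalIntegral.integral_eq_sub_of_hasDerivAt hHD
    ((hcont.mono (by rw [Set.uIcc_of_le hb])).intervalIntegrable)]
  rw [Real.log_one, zero_pow (by omega : j ≠ 0), sub_zero]

theorem abel_step : ∃ C : ℝ, 0 ≤ C ∧ ∀ k : ℕ, 1 ≤ k → ∀ b : ℝ, 2 ≤ b →
    |∑ n ∈ Icc 0 ⌊b⌋₊, Real.log n ^ (k-1) * aP n - Real.log b ^ k / k|
      ≤ C * Real.log b ^ (k - 1) := by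
  obtain ⟨C₄, hC₄0, hC₄⟩ := mertens_primes_real
  refine ⟨2 * C₄, by linarith, fun k hk b hb => ?_⟩
  obtain ⟨m, rfl⟩ : ∃ m, k = m + 1 := ⟨k - 1, by omega⟩
  simp only [Nat.add_sub_cancel]
  have hb1 : (1:ℝ) ≤ b := by linarith
  have hlogb : 0 ≤ Real.log b := Real.log_nonneg hb1
  have hEb := hC₄ b hb1
  rcases Nat.eq_zero_or_pos m with rfl | hm
  · simp only [pow_zero, one_mul, pow_one]
    norm_num
    rw [abs_le] at hEb ⊢
    constructor <;> [linarith [hEb.1]; linarith [hEb.2]]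
  -- main case m ≥ 1
  set f : ℝ → ℝ := fun t => Real.log t ^ m with hf
  set φ : ℝ → ℝ := fun t => (m:ℝ) * Real.log t ^ (m-1) * t⁻¹ with hφ
  have hne : ∀ t ∈ Set.Icc (1:ℝ) b, t ≠ 0 := fun t ht =>
    ne_of_gt (lt_of_lt_of_le zero_lt_one ht.1)
  have hHD : ∀ t : ℝ, t ≠ 0 → HasDerivAt f (φ t) t := fun t ht =>
    (Real.hasDerivAt_log ht).pow m
  have hEqOn : Set.EqOn (deriv f) φ (Set.Icc 1 b) := fun t ht =>
    (hHD t (hne t ht)).deriv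
  have hφcont : ContinuousOn φ (Set.Icc 1 b) := by
    refine (continuousOn_const.mul ((Real.continuousOn_log.mono ?_).pow _)).mul
      (continuousOn_id.inv₀ hne)
    intro t ht; exact hne t ht
  have hf_int : IntegrableOn (deriv f) (Set.Icc 1 b) :=
    (hφcont.integrableOn_Icc).congr_fun (fun t ht => (hEqOn ht).symm) measurableSet_Icc
  have hf_diff : ∀ t ∈ Set.Icc (1:ℝ) b, DifferentiableAt ℝ f t := fun t ht =>
    (hHD t (hne t ht)).differentiableAt
  have habel := sum_mul_eq_sub_integral_mul₀ aP (by simp [aP]) b hf_diff hf_int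
  -- monotonicity of the partial sums
  have hmono : Monotone (fun t : ℝ => ∑ n ∈ Icc 0 ⌊t⌋₊, aP n) := by
    intro s t hst
    exact Finset.sum_le_sum_of_subset_of_nonneg
      (Finset.Icc_subset_Icc le_rfl (Nat.floor_mono hst)) (fun n _ _ => aP_nonneg n)
  -- integrability of deriv f * log
  have hcont1 : ContinuousOn (fun t => φ t * Real.log t) (Set.Icc 1 b) :=
    hφcont.mul (Real.continuousOn_log.mono (fun t ht => hne t ht))
  have hint1 : IntegrableOn (fun t => deriv f t * Real.log t) (Set.Ioc 1 b) :=
    ((hcont1.integrableOn_Icc).mono_set Set.Ioc_subset_Icc_self).congr_fun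
      (fun t ht => by rw [hEqOn (Set.Ioc_subset_Icc_self ht)]) measurableSet_Ioc
  -- integrability of deriv f * A
  have hint2 : IntegrableOn (fun t => deriv f t * ∑ n ∈ Icc 0 ⌊t⌋₊, aP n)
      (Set.Ioc 1 b) := by
    have hmin : Monotone (fun t : ℝ => ∑ n ∈ Icc 0 ⌊min t b⌋₊, aP n) :=
      hmono.comp (monotone_id.min monotone_const)
    have hbd : ∀ t : ℝ, ‖∑ n ∈ Icc 0 ⌊min t b⌋₊, aP n‖ ≤ ∑ n ∈ Icc 0 ⌊b⌋₊, aP n := by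
      intro t
      rw [Real.norm_eq_abs, abs_of_nonneg (Finset.sum_nonneg fun n _ => aP_nonneg n)]
      exact hmono (min_le_right t b)
    have h1 : IntegrableOn
        (fun t => (∑ n ∈ Icc 0 ⌊min t b⌋₊, aP n) * deriv f t) (Set.Ioc 1 b) :=
      (hf_int.mono_set Set.Ioc_subset_Icc_self).bdd_mul
        hmin.measurable.aestronglyMeasurable (Filter.Eventually.of_forall hbd)
    refine h1.congr_fun (fun t ht => ?_) measurableSet_Ioc
    beta_reduce
    rw [min_eq_left ht.2, mul_comm]
  -- integrability of deriv f * E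
  have hsub : IntegrableOn
      ((fun t => deriv f t * ∑ n ∈ Icc 0 ⌊t⌋₊, aP n) - fun t => deriv f t * Real.log t)
      (Set.Ioc 1 b) := hint2.sub hint1
  have hint3 : IntegrableOn
      (fun t => deriv f t * ((∑ n ∈ Icc 0 ⌊t⌋₊, aP n) - Real.log t)) (Set.Ioc 1 b) :=
    hsub.congr_fun (fun t ht => by simp only [Pi.sub_apply]; ring) measurableSet_Ioc
  -- splitting the integral
  have hsplit : ∫ t in Set.Ioc 1 b, deriv f t * ∑ n ∈ Icc 0 ⌊t⌋₊, aP n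
      = (∫ t in Set.Ioc 1 b, deriv f t * Real.log t)
        + ∫ t in Set.Ioc 1 b, deriv f t * ((∑ n ∈ Icc 0 ⌊t⌋₊, aP n) - Real.log t) := by
    rw [← integral_add hint1 hint3]
    apply integral_congr_ae
    filter_upwards with t
    ring
  -- first integral
  have hI1 : ∫ t in Set.Ioc 1 b, deriv f t * Real.log t
      = ((m:ℝ)/((m:ℝ)+1)) * Real.log b ^ (m+1) := by
    rw [setIntegral_congr_fun measurableSet_Ioc
      (show Set.EqOn (fun t => deriv f t * Real.log t)
        (fun t => ((m:ℝ)/((m:ℝ)+1)) * (((m+1:ℕ):ℝ) * Real.log t ^ ((m+1)-1) * t⁻¹))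
        (Set.Ioc 1 b) from ?_)]
    · rw [integral_const_mul, ftc_pow (m+1) (by omega) b hb1]
    · intro t ht
      have h1 : deriv f t = φ t := hEqOn (Set.Ioc_subset_Icc_self ht)
      show deriv f t * Real.log t = _
      rw [h1]
      have h2 : Real.log t ^ (m-1) * Real.log t = Real.log t ^ m := by
        rw [← pow_succ]
        congr 1
        omega
      calc (m:ℝ) * Real.log t ^ (m-1) * t⁻¹ * Real.log t
          = (m:ℝ) * (Real.log t ^ (m-1) * Real.log t) * t⁻¹ := by ring
        _ = (m:ℝ) * Real.log t ^ m * t⁻¹ := by rw [h2]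
        _ = ((m:ℝ)/((m:ℝ)+1)) * (((m+1:ℕ):ℝ) * Real.log t ^ ((m+1)-1) * t⁻¹) := by
            simp only [Nat.add_sub_cancel, Nat.cast_add, Nat.cast_one]
            have h3 : ((m:ℝ)+1) ≠ 0 := by positivity
            have ht0 : t ≠ 0 := ne_of_gt (lt_trans zero_lt_one ht.1)
            field_simp
  -- second integral bound
  have hI2 : |∫ t in Set.Ioc 1 b, deriv f t * ((∑ n ∈ Icc 0 ⌊t⌋₊, aP n) - Real.log t)|
      ≤ C₄ * Real.log b ^ m := by
    have hg : IntegrableOn (fun t => C₄ * φ t) (Set.Ioc 1 b) :=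
      ((hφcont.integrableOn_Icc).mono_set Set.Ioc_subset_Icc_self).const_mul C₄
    have hbound : ∀ᵐ t ∂(volume.restrict (Set.Ioc 1 b)),
        ‖deriv f t * ((∑ n ∈ Icc 0 ⌊t⌋₊, aP n) - Real.log t)‖ ≤ C₄ * φ t := by
      rw [ae_restrict_iff' measurableSet_Ioc]
      filter_upwards with t ht
      have h1 : deriv f t = φ t := hEqOn (Set.Ioc_subset_Icc_self ht)
      have hφ0 : 0 ≤ φ t := by
        have hlt : (0:ℝ) < t := lt_trans zero_lt_one ht.1
        have : 0 ≤ Real.log t := Real.log_nonneg (le_of_lt ht.1)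
        positivity
      rw [Real.norm_eq_abs, h1, abs_mul, abs_of_nonneg hφ0, mul_comm]
      exact mul_le_mul_of_nonneg_right (hC₄ t (le_of_lt ht.1)) hφ0
    calc |∫ t in Set.Ioc 1 b, deriv f t * ((∑ n ∈ Icc 0 ⌊t⌋₊, aP n) - Real.log t)|
        ≤ ∫ t in Set.Ioc 1 b, C₄ * φ t := by
          rw [← Real.norm_eq_abs]
          exact norm_integral_le_of_norm_le hg hbound
      _ = C₄ * Real.log b ^ m := by
          rw [integral_const_mul, show φ = fun t => (m:ℝ) * Real.log t ^ (m-1) * t⁻¹ from rfl,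
            ftc_pow m hm b hb1]
  -- assemble
  rw [habel, hsplit, hI1]
  push_cast
  have hfb : f b = Real.log b ^ m := rfl
  have e1 : f b * (∑ n ∈ Icc 0 ⌊b⌋₊, aP n)
      - (((m:ℝ)/((m:ℝ)+1)) * Real.log b ^ (m+1)
        + ∫ t in Set.Ioc 1 b, deriv f t * ((∑ n ∈ Icc 0 ⌊t⌋₊, aP n) - Real.log t))
      - Real.log b ^ (m+1) / ((m:ℝ)+1)
      = Real.log b ^ m * ((∑ n ∈ Icc 0 ⌊b⌋₊, aP n) - Real.log b)
        - ∫ t in Set.Ioc 1 b, deriv f t * ((∑ n ∈ Icc 0 ⌊t⌋₊, aP n) - Real.log t) := by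
    rw [hfb]
    have h3 : ((m:ℝ)+1) ≠ 0 := by positivity
    field_simp
    ring
  calc |f b * (∑ n ∈ Icc 0 ⌊b⌋₊, aP n)
      - (((m:ℝ)/((m:ℝ)+1)) * Real.log b ^ (m+1)
        + ∫ t in Set.Ioc 1 b, deriv f t * ((∑ n ∈ Icc 0 ⌊t⌋₊, aP n) - Real.log t))
      - Real.log b ^ (m+1) / ((m:ℝ)+1)|
      = |Real.log b ^ m * ((∑ n ∈ Icc 0 ⌊b⌋₊, aP n) - Real.log b)
        - ∫ t in Set.Ioc 1 b, deriv f t * ((∑ n ∈ Icc 0 ⌊t⌋₊, aP n) - Real.log t)| := by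
        rw [e1]
    _ ≤ |Real.log b ^ m * ((∑ n ∈ Icc 0 ⌊b⌋₊, aP n) - Real.log b)|
        + |∫ t in Set.Ioc 1 b, deriv f t * ((∑ n ∈ Icc 0 ⌊t⌋₊, aP n) - Real.log t)| :=
        abs_sub _ _
    _ ≤ Real.log b ^ m * C₄ + C₄ * Real.log b ^ m := by
        refine add_le_add ?_ hI2
        rw [abs_mul, abs_of_nonneg (by positivity : (0:ℝ) ≤ Real.log b ^ m)]
        exact mul_le_mul_of_nonneg_left hEb (by positivity)
    _ = 2 * C₄ * Real.log b ^ m := by ring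

end auxiliary

/-- The finset of primes `p ≤ b`. -/
noncomputable def primesUpTo (b : ℝ) : Finset ℕ := (Finset.Iic ⌊b⌋₊).filter Nat.Prime

theorem popa_evaluation (k : ℕ) (hk : 1 ≤ k) :
    ∃ M : ℝ, ∀ x : ℝ, 4 ≤ x →
      |(∑ p ∈ primesUpTo (Real.sqrt x), (Real.log p) ^ k / (p * (Real.log x) ^ k))
        - 1 / (k * 2 ^ k)| ≤ M / (2 ^ (k - 1) * Real.log x) := by
  obtain ⟨C, hC0, hC⟩ := abel_step
  refine ⟨C, fun x hx => ?_⟩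
  set b := Real.sqrt x with hbdef
  have hx0 : (0:ℝ) ≤ x := by linarith
  have hb2 : (2:ℝ) ≤ b := by
    rw [hbdef, show (2:ℝ) = Real.sqrt 4 by
      rw [show (4:ℝ) = 2^2 by norm_num, Real.sqrt_sq (by norm_num)]]
    exact Real.sqrt_le_sqrt hx
  have hsqrt : Real.log b = Real.log x / 2 := Real.log_sqrt hx0
  have hlogx : 0 < Real.log x := by
    apply Real.log_pos; linarith
  have hk0 : (0:ℝ) < k := by exact_mod_cast hk
  have hL : 0 < Real.log x ^ k := by positivity
  -- rewrite the sum
  have hsum1 : ∑ p ∈ primesUpTo b, Real.log p ^ k / (p * Real.log x ^ k)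
      = (∑ p ∈ primesUpTo b, Real.log p ^ k / p) / Real.log x ^ k := by
    rw [Finset.sum_div]
    exact Finset.sum_congr rfl fun p _ => by rw [div_div]
  have hsum2 : ∑ n ∈ Icc 0 ⌊b⌋₊, Real.log n ^ (k-1) * aP n
      = ∑ p ∈ primesUpTo b, Real.log p ^ k / p := by
    rw [primesUpTo, show Icc 0 ⌊b⌋₊ = Iic ⌊b⌋₊ by ext n; simp, Finset.sum_filter]
    refine Finset.sum_congr rfl fun n _ => ?_
    simp only [aP, mul_ite, mul_zero]
    split
    · rw [mul_div_assoc', ← pow_succ, show k - 1 + 1 = k by omega]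
    · rfl
  have hkey := hC k hk b hb2
  rw [hsum2] at hkey
  -- main term identity
  have hmain : Real.log b ^ k / k / Real.log x ^ k = 1 / (k * 2 ^ k) := by
    rw [hsqrt, div_pow]
    field_simp
  -- error term identity
  have herr : Real.log b ^ (k-1) / Real.log x ^ k = 1 / (2 ^ (k-1) * Real.log x) := by
    rw [hsqrt, div_pow, show Real.log x ^ k = Real.log x ^ (k-1) * Real.log x by
      rw [← pow_succ]; congr 1; omega]
    field_simp
  rw [hsum1, ← hmain, div_sub_div_same, abs_div, abs_of_pos hL]
  rw [div_le_iff₀ hL]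
  calc |∑ p ∈ primesUpTo b, Real.log p ^ k / p - Real.log b ^ k / k|
      ≤ C * Real.log b ^ (k-1) := hkey
    _ = C * (Real.log b ^ (k-1) / Real.log x ^ k) * Real.log x ^ k := by
        field_simp
    _ = C * (1 / (2 ^ (k-1) * Real.log x)) * Real.log x ^ k := by rw [herr]
    _ = C / (2 ^ (k-1) * Real.log x) * Real.log x ^ k := by ring
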